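/- Fix integers r, r_C, N, C with 0 ≤ r_C ≤ min(C, r) and r − r_C < N; let v^N : Fin N → ℝ and v^C : Fin C → ℝ be antitone with nonnegative values, and let ε > 0. Define colluder bids b : Fin C → ℝ by b i = max (v^C i) (v^N (r − r_C)) + ε for i < r_C and b i = 0 for i ≥ r_C, and let T be the multiset consisting of all N values v^N i together with all C bids b i. Then: (i) the (r+1)-th largest element of T equals v^N (r − r_C); and (ii) every bid b i with i < r_C is strictly greater than the (r+1)-th largest element of T. Consequently, in the VCG auction on these bids all r_C positive colluder bids win, the uniform price equals v^N (r − r_C), and the colluders' joint utility equals ∑_{i < r_C} v^C i − r_C · v^N (r − r_C). -/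
import Mathlib


/-- The `k`-th largest element (1-indexed) of a multiset of reals. -/
noncomputable def kthLargest (s : Multiset ℝ) (k : ℕ) : ℝ :=
  (s.sort (· ≤ ·)).getD (Multiset.card s - k) 0

lemma card_filter_ge_val (n k : ℕ) :
    (Finset.univ.filter (fun i : Fin n => k ≤ (i:ℕ))).card = n - k := by
  rw [← Finset.card_image_of_injective _ Fin.val_injective]
  have : (Finset.univ.filter (fun i : Fin n => k ≤ (i:ℕ))).image Fin.val = Finset.Ico k n := by
    ext x
    simp [Finset.mem_Ico, Fin.exists_iff, and_comm]
  rw [this, Nat.card_Ico]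

lemma key_le (p : ℝ) : ∀ (L : List ℝ) (_ : L.Pairwise (· ≤ ·)) (j : ℕ)
    (_ : j + 1 ≤ L.countP (fun x => decide (x ≤ p))), L.getD j 0 ≤ p := by
  intro L
  induction L with
  | nil => intro _ j h; simp at h
  | cons a t ih =>
    intro hs j h
    rw [List.pairwise_cons] at hs
    rw [List.countP_cons] at h
    by_cases hap : a ≤ p
    · cases j with
      | zero => simpa using hap
      | succ j' =>
        simp only [List.getD_cons_succ]
        exact ih hs.2 j' (by simp [hap] at h; omega)
    · have ht : t.countP (fun x => decide (x ≤ p)) = 0 := by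
        rw [List.countP_eq_zero]
        intro x hx
        simp only [decide_eq_true_eq]
        exact fun hxp => hap (le_trans (hs.1 x hx) hxp)
      simp [hap, ht] at h

lemma key_ge (p : ℝ) : ∀ (L : List ℝ) (_ : L.Pairwise (· ≤ ·)) (j : ℕ) (_ : j < L.length)
    (_ : L.countP (fun x => decide (x < p)) ≤ j), p ≤ L.getD j 0 := by
  intro L
  induction L with
  | nil => intro _ j hj; simp at hj
  | cons a t ih =>
    intro hs j hj h
    rw [List.pairwise_cons] at hs
    rw [List.countP_cons] at h
    by_cases hap : a < p
    · cases j with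
      | zero => simp [hap] at h
      | succ j' =>
        simp only [List.getD_cons_succ]
        exact ih hs.2 j' (by simpa using hj) (by simp [hap] at h; omega)
    · cases j with
      | zero => simpa using le_of_not_gt hap
      | succ j' =>
        simp only [List.getD_cons_succ]
        have ht : t.countP (fun x => decide (x < p)) = 0 := by
          rw [List.countP_eq_zero]
          intro x hx
          simp only [decide_eq_true_eq]
          exact fun hxp => hap (lt_of_le_of_lt (hs.1 x hx) hxp)
        exact ih hs.2 j' (by simpa using hj) (by omega)

lemma key_le' (s : Multiset ℝ) (p : ℝ) (j : ℕ)
    (h : j + 1 ≤ s.countP (fun x => x ≤ p)) : (s.sort (· ≤ ·)).getD j 0 ≤ p := by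
  have hc := Multiset.coe_countP (p := fun x : ℝ => x ≤ p) (s.sort (· ≤ ·))
  rw [Multiset.sort_eq] at hc
  exact key_le p _ (s.pairwise_sort _) j (by rw [← hc]; exact h)

lemma key_ge' (s : Multiset ℝ) (p : ℝ) (j : ℕ) (hj : j < Multiset.card s)
    (h : s.countP (fun x => x < p) ≤ j) : p ≤ (s.sort (· ≤ ·)).getD j 0 := by
  have hc := Multiset.coe_countP (p := fun x : ℝ => x < p) (s.sort (· ≤ ·))
  rw [Multiset.sort_eq] at hc
  exact key_ge p _ (s.pairwise_sort _) j (by rwa [Multiset.length_sort]) (by rw [← hc]; exact h)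

/-- With the colluders' optimal bids (the top `rC` colluders bid
`max (vC i) (vN (r - rC)) + ε` and the rest bid `0`), in the combined multiset `T` of
all bids: (i) the `(r+1)`-th largest element of `T` equals `vN (r - rC)`; (ii) every
positive colluder bid strictly exceeds it; hence all `rC` positive colluder bids win,
the uniform price is `vN (r - rC)`, and the colluders' joint utility equals
`∑_{i < rC} vC i - rC * vN (r - rC)`. -/
theorem stmt_1 (r rC N C : ℕ) (hrCC : rC ≤ C) (hrCr : rC ≤ r) (hrN : r - rC < N)
    (vN : Fin N → ℝ) (vC : Fin C → ℝ)
    (hvN : Antitone vN) (hvC : Antitone vC)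
    (hvNnn : ∀ i, 0 ≤ vN i) (hvCnn : ∀ i, 0 ≤ vC i)
    (ε : ℝ) (hε : 0 < ε)
    (b : Fin C → ℝ)
    (hb : ∀ i : Fin C,
      b i = if (i : ℕ) < rC then max (vC i) (vN ⟨r - rC, hrN⟩) + ε else 0)
    (T : Multiset ℝ)
    (hT : T = Multiset.map vN Finset.univ.val + Multiset.map b Finset.univ.val) :
    kthLargest T (r + 1) = vN ⟨r - rC, hrN⟩ ∧
    (∀ i : Fin C, (i : ℕ) < rC → kthLargest T (r + 1) < b i) ∧
    (∑ i : Fin rC, (vC (Fin.castLE hrCC i) - kthLargest T (r + 1))) =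
      (∑ i : Fin rC, vC (Fin.castLE hrCC i)) - rC * vN ⟨r - rC, hrN⟩ := by
  set p : ℝ := vN ⟨r - rC, hrN⟩ with hp
  have hpnn : 0 ≤ p := hvNnn _
  have hcard : Multiset.card T = N + C := by simp [hT]
  have hrNC : r + 1 ≤ N + C := by omega
  -- count of elements ≤ p
  have hcount_le : N + C - r ≤ T.countP (fun x => x ≤ p) := by
    rw [hT, Multiset.countP_add, Multiset.countP_map, Multiset.countP_map,
      ← Finset.filter_val, ← Finset.filter_val, Finset.card_val, Finset.card_val]
    have h1 : (Finset.univ.filter (fun i : Fin N => r - rC ≤ (i:ℕ))).card ≤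
        (Finset.univ.filter (fun i : Fin N => vN i ≤ p)).card := by
      apply Finset.card_le_card
      intro i hi
      simp only [Finset.mem_filter, Finset.mem_univ, true_and] at hi ⊢
      exact hvN (show (⟨r - rC, hrN⟩ : Fin N) ≤ i from hi)
    have h2 : (Finset.univ.filter (fun i : Fin C => rC ≤ (i:ℕ))).card ≤
        (Finset.univ.filter (fun i : Fin C => b i ≤ p)).card := by
      apply Finset.card_le_card
      intro i hi
      simp only [Finset.mem_filter, Finset.mem_univ, true_and] at hi ⊢
      rw [hb i, if_neg (by omega)]
      exact hpnn
    rw [card_filter_ge_val] at h1 h2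
    omega
  -- count of elements < p
  have hcount_lt : T.countP (fun x => x < p) ≤ N + C - (r + 1) := by
    rw [hT, Multiset.countP_add, Multiset.countP_map, Multiset.countP_map,
      ← Finset.filter_val, ← Finset.filter_val, Finset.card_val, Finset.card_val]
    have h1 : (Finset.univ.filter (fun i : Fin N => vN i < p)).card ≤
        (Finset.univ.filter (fun i : Fin N => r - rC + 1 ≤ (i:ℕ))).card := by
      apply Finset.card_le_card
      intro i hi
      simp only [Finset.mem_filter, Finset.mem_univ, true_and] at hi ⊢
      by_contra hlt
      have : i ≤ (⟨r - rC, hrN⟩ : Fin N) := by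
        rw [Fin.le_def]
        exact (by omega : (i:ℕ) ≤ r - rC)
      exact absurd (hvN this) (not_le.mpr hi)
    have h2 : (Finset.univ.filter (fun i : Fin C => b i < p)).card ≤
        (Finset.univ.filter (fun i : Fin C => rC ≤ (i:ℕ))).card := by
      apply Finset.card_le_card
      intro i hi
      simp only [Finset.mem_filter, Finset.mem_univ, true_and] at hi ⊢
      by_contra hlt
      rw [hb i, if_pos (by omega)] at hi
      have : p ≤ max (vC i) p + ε := le_add_of_le_of_nonneg (le_max_right _ _) hε.le
      linarith
    rw [card_filter_ge_val] at h1 h2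
    omega
  have hk : kthLargest T (r + 1) = p := by
    unfold kthLargest
    rw [hcard]
    refine le_antisymm (key_le' T p _ ?_) (key_ge' T p _ (by omega) ?_)
    · omega
    · omega
  refine ⟨hk, ?_, ?_⟩
  · intro i hi
    rw [hk, hb i, if_pos hi]
    calc p ≤ max (vC i) p := le_max_right _ _
      _ < max (vC i) p + ε := by linarith
  · rw [hk, Finset.sum_sub_distrib, Finset.sum_const, Finset.card_univ, Fintype.card_fin,
      nsmul_eq_mul]
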